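/- For λ > 1, the integral ∫₀¹ (3λ(z-1) - (z-1)² - λ²(z²-2z+3) + λ³(z²+z-1)) / (λ√(1+λ)·√(1-z)·(1-z+λ(1+z))^{3/2}) dz equals (1+λ²-2λ⁴+6λ²√(λ²-1)·arctan(√((λ-1)/(1+λ))))/(λ(1+λ)(λ-1)³), and this quantity is negative. -/

import Mathlib

open Set intervalIntegral

set_option maxHeartbeats 1000000


lemma arctan_le_poly {x : ℝ} (hx : 0 ≤ x) :
    Real.arctan x ≤ x - x ^ 3 / 3 + x ^ 5 / 5 := by
  have key : ∀ y : ℝ, HasDerivAt (fun t => t - t ^ 3 / 3 + t ^ 5 / 5 - Real.arctan t)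
      (1 - y ^ 2 + y ^ 4 - 1 / (1 + y ^ 2)) y := by
    intro y
    have h1 : HasDerivAt (fun t : ℝ => t - t ^ 3 / 3 + t ^ 5 / 5)
        (1 - y ^ 2 + y ^ 4) y := by
      have := (((hasDerivAt_id y).sub ((hasDerivAt_pow 3 y).div_const 3)).add
        ((hasDerivAt_pow 5 y).div_const 5))
      refine this.congr_deriv (Eq.symm ?_)
      push_cast; ring
    exact h1.sub (Real.hasDerivAt_arctan y)
  have mono : MonotoneOn (fun t => t - t ^ 3 / 3 + t ^ 5 / 5 - Real.arctan t) (Set.Ici 0) := by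
    apply monotoneOn_of_deriv_nonneg (convex_Ici 0)
    · exact (Continuous.continuousOn (by continuity)).sub
        Real.continuous_arctan.continuousOn
    · intro y _
      exact (key y).differentiableAt.differentiableWithinAt
    · intro y hy
      rw [(key y).deriv]
      have h2 : (0:ℝ) < 1 + y ^ 2 := by positivity
      rw [sub_nonneg, div_le_iff₀ h2]
      nlinarith [pow_le_pow_left₀ (le_of_lt h2) (le_refl (1+y^2)) 1, sq_nonneg (y^3)]
  have := mono (Set.self_mem_Ici) (by exact hx) hx
  simp only [Real.arctan_zero] at this
  linarith [this]



lemma neg_part (lam : ℝ) (hlam : 1 < lam) :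
    (1 + lam ^ 2 - 2 * lam ^ 4 + 6 * lam ^ 2 * Real.sqrt (lam ^ 2 - 1) *
        Real.arctan (Real.sqrt ((lam - 1) / (1 + lam)))) /
        (lam * (1 + lam) * (lam - 1) ^ 3) < 0 := by
  have h0 : (0:ℝ) < lam := by linarith
  have h1 : (0:ℝ) < 1 + lam := by linarith
  have h2 : (0:ℝ) < lam - 1 := by linarith
  set y := Real.sqrt ((lam - 1) / (1 + lam)) with hy
  have hy0 : 0 ≤ y := Real.sqrt_nonneg _
  have hy2 : y ^ 2 = (lam - 1) / (1 + lam) := Real.sq_sqrt (by positivity)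
  have hsq : Real.sqrt (lam ^ 2 - 1) = (1 + lam) * y := by
    rw [show lam ^ 2 - 1 = ((1 + lam) * y) ^ 2 by rw [mul_pow, hy2]; field_simp; ring]
    exact Real.sqrt_sq (by positivity)
  have harc : Real.arctan y ≤ y - y ^ 3 / 3 + y ^ 5 / 5 := arctan_le_poly hy0
  have hnum : 1 + lam ^ 2 - 2 * lam ^ 4 + 6 * lam ^ 2 * Real.sqrt (lam ^ 2 - 1) *
      Real.arctan y < 0 := by
    have hb : 1 + lam ^ 2 - 2 * lam ^ 4 + 6 * lam ^ 2 * Real.sqrt (lam ^ 2 - 1) *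
        Real.arctan y ≤ 1 + lam ^ 2 - 2 * lam ^ 4 +
          6 * lam ^ 2 * (1 + lam) * (y ^ 2 - (y ^ 2) ^ 2 / 3 + (y ^ 2) ^ 3 / 5) := by
      rw [hsq]
      have hpos : 0 ≤ 6 * lam ^ 2 * ((1 + lam) * y) := by positivity
      nlinarith [mul_le_mul_of_nonneg_left harc hpos]
    have hq : 1 + lam ^ 2 - 2 * lam ^ 4 +
        6 * lam ^ 2 * (1 + lam) * (y ^ 2 - (y ^ 2) ^ 2 / 3 + (y ^ 2) ^ 3 / 5)
        = -((lam - 1) ^ 3 * (30 * lam ^ 3 + 72 * lam ^ 2 + 75 * lam + 15)) /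
            (15 * (1 + lam) ^ 2) := by
      rw [hy2]; field_simp; ring
    rw [hq] at hb
    have : -((lam - 1) ^ 3 * (30 * lam ^ 3 + 72 * lam ^ 2 + 75 * lam + 15)) /
        (15 * (1 + lam) ^ 2) < 0 := by
      apply div_neg_of_neg_of_pos _ (by positivity)
      have : 0 < (lam - 1) ^ 3 * (30 * lam ^ 3 + 72 * lam ^ 2 + 75 * lam + 15) := by
        positivity
      linarith
    linarith
  exact div_neg_of_neg_of_pos hnum (by positivity)


noncomputable def Fa (lam : ℝ) (z : ℝ) : ℝ :=
  -(Real.sqrt (1 - z) * ((lam - 1) * (lam ^ 3 - lam ^ 2 - 1) * z - (lam + 1) * (2 * lam ^ 2 + 1))) /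
      (lam * (lam - 1) ^ 2 * Real.sqrt (1 + lam) * Real.sqrt (1 - z + lam * (1 + z)))
    - 6 * lam / ((lam - 1) ^ 2 * Real.sqrt (lam ^ 2 - 1)) *
      Real.arctan (Real.sqrt (lam - 1) * Real.sqrt (1 - z) / Real.sqrt (1 - z + lam * (1 + z)))

lemma deriv_part (lam : ℝ) (hlam : 1 < lam) {z : ℝ} (hz : z ∈ Set.Ioo (0:ℝ) 1) :
    HasDerivAt (Fa lam)
      ((3 * lam * (z - 1) - (z - 1) ^ 2 - lam ^ 2 * (z ^ 2 - 2 * z + 3) +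
          lam ^ 3 * (z ^ 2 + z - 1)) /
        (lam * Real.sqrt (1 + lam) * Real.sqrt (1 - z) *
          (1 - z + lam * (1 + z)) ^ ((3:ℝ)/2))) z := by
  obtain ⟨hz0, hz1⟩ := hz
  have h1z : (0:ℝ) < 1 - z := by linarith
  have hDz : (0:ℝ) < 1 - z + lam * (1 + z) := by nlinarith
  have hl0 : (0:ℝ) < lam := by linarith
  have hl1 : (0:ℝ) < lam - 1 := by linarith
  have hl2 : (0:ℝ) < 1 + lam := by linarith
  set s := Real.sqrt (1 - z) with hs_def
  set r := Real.sqrt (1 - z + lam * (1 + z)) with hr_def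
  set q := Real.sqrt (lam - 1) with hq_def
  set e := Real.sqrt (1 + lam) with he_def
  have hs0 : 0 < s := Real.sqrt_pos.2 h1z
  have hr0 : 0 < r := Real.sqrt_pos.2 hDz
  have hq0 : 0 < q := Real.sqrt_pos.2 hl1
  have he0 : 0 < e := Real.sqrt_pos.2 hl2
  have hs2 : s ^ 2 = 1 - z := Real.sq_sqrt h1z.le
  have hr2 : r ^ 2 = 1 - z + lam * (1 + z) := Real.sq_sqrt hDz.le
  have hq2 : q ^ 2 = lam - 1 := Real.sq_sqrt hl1.le
  have he2 : e ^ 2 = 1 + lam := Real.sq_sqrt hl2.le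
  have hm : Real.sqrt (lam ^ 2 - 1) = q * e := by
    rw [hq_def, he_def, ← Real.sqrt_mul hl1.le]
    norm_num; ring_nf
  -- derivative of sqrt(1-z)
  have hds : HasDerivAt (fun z : ℝ => Real.sqrt (1 - z)) (-(1 / (2 * s))) z := by
    have hinner : HasDerivAt (fun z : ℝ => 1 - z) (-1) z := by
      simpa using (hasDerivAt_id z).const_sub 1
    have := (Real.hasDerivAt_sqrt h1z.ne').comp z hinner
    refine this.congr_deriv (Eq.symm ?_)
    rw [← hs_def]; ring
  -- derivative of sqrt(D z)
  have hdr : HasDerivAt (fun z : ℝ => Real.sqrt (1 - z + lam * (1 + z))) ((lam - 1) / (2 * r)) z := by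
    have hinner : HasDerivAt (fun z : ℝ => 1 - z + lam * (1 + z)) (lam - 1) z := by
      have := ((hasDerivAt_id z).const_sub 1).add (((hasDerivAt_id z).const_add 1).const_mul lam)
      refine this.congr_deriv (Eq.symm ?_); ring
    have := (Real.hasDerivAt_sqrt hDz.ne').comp z hinner
    refine this.congr_deriv (Eq.symm ?_)
    rw [← hr_def]; ring
  -- polynomial part
  have hdP : HasDerivAt (fun z : ℝ => (lam - 1) * (lam ^ 3 - lam ^ 2 - 1) * z - (lam + 1) * (2 * lam ^ 2 + 1))
      ((lam - 1) * (lam ^ 3 - lam ^ 2 - 1)) z := by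
    simpa using (((hasDerivAt_id z).const_mul ((lam - 1) * (lam ^ 3 - lam ^ 2 - 1))).sub_const
      ((lam + 1) * (2 * lam ^ 2 + 1)))
  -- Part A : algebraic term
  have hC : lam * (lam - 1) ^ 2 * e ≠ 0 := by positivity
  have hCr : lam * (lam - 1) ^ 2 * e * r ≠ 0 := by positivity
  have hA : HasDerivAt (fun z : ℝ =>
      -(Real.sqrt (1 - z) * ((lam - 1) * (lam ^ 3 - lam ^ 2 - 1) * z - (lam + 1) * (2 * lam ^ 2 + 1))) /
        (lam * (lam - 1) ^ 2 * Real.sqrt (1 + lam) * Real.sqrt (1 - z + lam * (1 + z))))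
      ((((lam - 1) * (lam ^ 3 - lam ^ 2 - 1) * z - (lam + 1) * (2 * lam ^ 2 + 1)) * r ^ 2
          - 2 * s ^ 2 * ((lam - 1) * (lam ^ 3 - lam ^ 2 - 1)) * r ^ 2
          + (lam - 1) * s ^ 2 * ((lam - 1) * (lam ^ 3 - lam ^ 2 - 1) * z - (lam + 1) * (2 * lam ^ 2 + 1)))
        / (2 * lam * (lam - 1) ^ 2 * e * s * (r ^ 2 * r))) z := by
    have hnum := hds.mul hdP
    have hden := hdr.const_mul (lam * (lam - 1) ^ 2 * e)
    have h := (hnum.div hden hCr).neg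
    have heq : ∀ w : ℝ, -(Real.sqrt (1 - w) * ((lam - 1) * (lam ^ 3 - lam ^ 2 - 1) * w - (lam + 1) * (2 * lam ^ 2 + 1)) /
        (lam * (lam - 1) ^ 2 * e * Real.sqrt (1 - w + lam * (1 + w)))) =
        -(Real.sqrt (1 - w) * ((lam - 1) * (lam ^ 3 - lam ^ 2 - 1) * w - (lam + 1) * (2 * lam ^ 2 + 1))) /
        (lam * (lam - 1) ^ 2 * Real.sqrt (1 + lam) * Real.sqrt (1 - w + lam * (1 + w))) := by
      intro w; rw [← he_def]; ring
    change HasDerivAt (fun w : ℝ => -(Real.sqrt (1 - w) * ((lam - 1) * (lam ^ 3 - lam ^ 2 - 1) * w - (lam + 1) * (2 * lam ^ 2 + 1)) /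
        (lam * (lam - 1) ^ 2 * e * Real.sqrt (1 - w + lam * (1 + w))))) _ z at h
    rw [funext heq] at h
    refine h.congr_deriv (Eq.symm ?_)
    simp only [Pi.mul_apply, ← hs_def, ← hr_def]
    field_simp
    ring
  -- Part B : arctan term
  have hsum : q ^ 2 * s ^ 2 + r ^ 2 = 2 * lam := by
    rw [hq2, hs2, hr2]; ring
  have hB : HasDerivAt (fun z : ℝ =>
      6 * lam / ((lam - 1) ^ 2 * Real.sqrt (lam ^ 2 - 1)) *
        Real.arctan (Real.sqrt (lam - 1) * Real.sqrt (1 - z) / Real.sqrt (1 - z + lam * (1 + z))))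
      (-(3 * lam / ((lam - 1) ^ 2 * e * s * r))) z := by
    have hw := (hds.const_mul q).div hdr hr0.ne'
    have haux := ((Real.hasDerivAt_arctan (q * s / r)).comp z hw).const_mul
      (6 * lam / ((lam - 1) ^ 2 * Real.sqrt (lam ^ 2 - 1)))
    have heq : ∀ w : ℝ, 6 * lam / ((lam - 1) ^ 2 * Real.sqrt (lam ^ 2 - 1)) *
        (Real.arctan ∘ fun w => q * Real.sqrt (1 - w) / Real.sqrt (1 - w + lam * (1 + w))) w =
        6 * lam / ((lam - 1) ^ 2 * Real.sqrt (lam ^ 2 - 1)) *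
          Real.arctan (Real.sqrt (lam - 1) * Real.sqrt (1 - w) / Real.sqrt (1 - w + lam * (1 + w))) := by
      intro w; rw [← hq_def]; rfl
    change HasDerivAt (fun w : ℝ => 6 * lam / ((lam - 1) ^ 2 * Real.sqrt (lam ^ 2 - 1)) *
        (Real.arctan ∘ fun w => q * Real.sqrt (1 - w) / Real.sqrt (1 - w + lam * (1 + w))) w) _ z at haux
    rw [funext heq] at haux
    refine haux.congr_deriv (Eq.symm ?_)
    rw [hm]
    have hrrs : 1 + (q * s / r) ^ 2 = 2 * lam / r ^ 2 := by
      rw [div_pow, mul_pow]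
      field_simp
      linarith [hsum]
    rw [hrrs, ← hr_def, ← hs_def]
    field_simp
    linear_combination (6*lam - 6) * hs2 + (6) * hr2
  -- assemble
  have key : ((((lam - 1) * (lam ^ 3 - lam ^ 2 - 1) * z - (lam + 1) * (2 * lam ^ 2 + 1)) * r ^ 2
      - 2 * s ^ 2 * ((lam - 1) * (lam ^ 3 - lam ^ 2 - 1)) * r ^ 2
      + (lam - 1) * s ^ 2 * ((lam - 1) * (lam ^ 3 - lam ^ 2 - 1) * z - (lam + 1) * (2 * lam ^ 2 + 1)))
      + 6 * lam ^ 2 * r ^ 2)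
      = 2 * (lam - 1) ^ 2 * (3 * lam * (z - 1) - (z - 1) ^ 2 - lam ^ 2 * (z ^ 2 - 2 * z + 3) +
          lam ^ 3 * (z ^ 2 + z - 1)) := by
    rw [hs2, hr2]; ring
  have hrpow : (1 - z + lam * (1 + z)) ^ ((3:ℝ)/2) = r ^ 2 * r := by
    rw [show (3:ℝ)/2 = 1 + 1/2 by norm_num, Real.rpow_add hDz, Real.rpow_one,
      ← Real.sqrt_eq_rpow, ← hr_def, ← hr2]
  have hF := hA.sub hB
  have : Fa lam = fun z : ℝ =>
      -(Real.sqrt (1 - z) * ((lam - 1) * (lam ^ 3 - lam ^ 2 - 1) * z - (lam + 1) * (2 * lam ^ 2 + 1))) /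
        (lam * (lam - 1) ^ 2 * Real.sqrt (1 + lam) * Real.sqrt (1 - z + lam * (1 + z)))
      - 6 * lam / ((lam - 1) ^ 2 * Real.sqrt (lam ^ 2 - 1)) *
        Real.arctan (Real.sqrt (lam - 1) * Real.sqrt (1 - z) / Real.sqrt (1 - z + lam * (1 + z))) := rfl
  change HasDerivAt (Fa lam) _ z at hF
  refine hF.congr_deriv (Eq.symm ?_)
  rw [hrpow]
  field_simp
  linear_combination (-lam^5*z + 3*lam^4*z + 2*lam^4*r^2 + 2*lam^4 - 3*lam^3*z - 4*lam^3*r^2 + 2*lam^2*z + 2*lam^2*r^2 - lam^2 - 2*lam*z - 2*lam*r^2 + z + 2*r^2 - 1) * hs2 +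
    (-3*lam^4*z + 2*lam^4 + 6*lam^3*z - 2*lam^3 - 3*lam^2*z - 2*lam^2 + 3*lam*z - lam - 3*z + 3) * hr2




theorem stmt_16 (lam : ℝ) (hlam : 1 < lam) :
    (∫ z in (0:ℝ)..1,
        (3 * lam * (z - 1) - (z - 1) ^ 2 - lam ^ 2 * (z ^ 2 - 2 * z + 3) +
          lam ^ 3 * (z ^ 2 + z - 1)) /
        (lam * Real.sqrt (1 + lam) * Real.sqrt (1 - z) *
          (1 - z + lam * (1 + z)) ^ ((3:ℝ)/2))) =
      (1 + lam ^ 2 - 2 * lam ^ 4 + 6 * lam ^ 2 * Real.sqrt (lam ^ 2 - 1) *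
        Real.arctan (Real.sqrt ((lam - 1) / (1 + lam)))) /
        (lam * (1 + lam) * (lam - 1) ^ 3) ∧
    (1 + lam ^ 2 - 2 * lam ^ 4 + 6 * lam ^ 2 * Real.sqrt (lam ^ 2 - 1) *
        Real.arctan (Real.sqrt ((lam - 1) / (1 + lam)))) /
        (lam * (1 + lam) * (lam - 1) ^ 3) < 0 := by
  have hl0 : (0:ℝ) < lam := by linarith
  have hl1 : (0:ℝ) < lam - 1 := by linarith
  have hl2 : (0:ℝ) < 1 + lam := by linarith
  refine ⟨?_, neg_part lam hlam⟩
  have hDpos : ∀ z ∈ Set.Icc (0:ℝ) 1, 0 < 1 - z + lam * (1 + z) := by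
    intro z hz
    have h1 := hz.1; have h2 := hz.2
    nlinarith
  have cs : Continuous fun z : ℝ => Real.sqrt (1 - z) :=
    Real.continuous_sqrt.comp (by continuity)
  have cr : Continuous fun z : ℝ => Real.sqrt (1 - z + lam * (1 + z)) :=
    Real.continuous_sqrt.comp (by continuity)
  have hcont : ContinuousOn (Fa lam) (Set.Icc 0 1) := by
    apply ContinuousOn.sub
    · apply ContinuousOn.div
      · exact ((cs.mul (by continuity)).neg).continuousOn
      · exact (continuous_const.mul cr).continuousOn
      · intro z hz
        have h1 : 0 < Real.sqrt (1 - z + lam * (1 + z)) := Real.sqrt_pos.2 (hDpos z hz)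
        have h2 : 0 < Real.sqrt (1 + lam) := Real.sqrt_pos.2 hl2
        positivity
    · apply continuousOn_const.mul
      apply Real.continuous_arctan.comp_continuousOn
      apply ContinuousOn.div
      · exact (continuous_const.mul cs).continuousOn
      · exact cr.continuousOn
      · exact fun z hz => (Real.sqrt_pos.2 (hDpos z hz)).ne'
  have hderiv : ∀ z ∈ Set.Ioo (0:ℝ) 1, HasDerivWithinAt (Fa lam)
      ((3 * lam * (z - 1) - (z - 1) ^ 2 - lam ^ 2 * (z ^ 2 - 2 * z + 3) +
          lam ^ 3 * (z ^ 2 + z - 1)) /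
        (lam * Real.sqrt (1 + lam) * Real.sqrt (1 - z) *
          (1 - z + lam * (1 + z)) ^ ((3:ℝ)/2))) (Set.Ioi z) z :=
    fun z hz => (deriv_part lam hlam hz).hasDerivWithinAt
  have hint : IntervalIntegrable (fun z : ℝ =>
      (3 * lam * (z - 1) - (z - 1) ^ 2 - lam ^ 2 * (z ^ 2 - 2 * z + 3) +
          lam ^ 3 * (z ^ 2 + z - 1)) /
        (lam * Real.sqrt (1 + lam) * Real.sqrt (1 - z) *
          (1 - z + lam * (1 + z)) ^ ((3:ℝ)/2))) MeasureTheory.volume 0 1 := by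
    have hbase : IntervalIntegrable (fun x : ℝ => x ^ (-(1/2) : ℝ)) MeasureTheory.volume 0 1 :=
      intervalIntegral.intervalIntegrable_rpow' (by norm_num)
    have hcomp : IntervalIntegrable (fun x : ℝ => (1 - x) ^ (-(1/2) : ℝ)) MeasureTheory.volume 0 1 := by
      have := (hbase.comp_sub_left 1).symm
      norm_num at this
      exact this
    have hg : ContinuousOn (fun z : ℝ =>
        (3 * lam * (z - 1) - (z - 1) ^ 2 - lam ^ 2 * (z ^ 2 - 2 * z + 3) +
          lam ^ 3 * (z ^ 2 + z - 1)) /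
          (lam * Real.sqrt (1 + lam) * (1 - z + lam * (1 + z)) ^ ((3:ℝ)/2)))
        (Set.uIcc (0:ℝ) 1) := by
      rw [Set.uIcc_of_le (by norm_num)]
      apply ContinuousOn.div
      · exact (by fun_prop : Continuous fun z : ℝ =>
          3 * lam * (z - 1) - (z - 1) ^ 2 - lam ^ 2 * (z ^ 2 - 2 * z + 3) +
            lam ^ 3 * (z ^ 2 + z - 1)).continuousOn
      · exact continuousOn_const.mul ((by fun_prop : Continuous fun z : ℝ =>
          1 - z + lam * (1 + z)).continuousOn.rpow_const fun z hz => Or.inl (hDpos z hz).ne')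
      · intro z hz
        have h1 : 0 < (1 - z + lam * (1 + z)) ^ ((3:ℝ)/2) :=
          Real.rpow_pos_of_pos (hDpos z hz) _
        have h2 : 0 < Real.sqrt (1 + lam) := Real.sqrt_pos.2 hl2
        positivity
    have hprod := hcomp.continuousOn_mul hg
    apply hprod.congr_ae
    apply Filter.eventuallyEq_of_mem (MeasureTheory.self_mem_ae_restrict measurableSet_uIoc)
    intro z hz
    rw [Set.uIoc_of_le (by norm_num)] at hz
    rcases eq_or_lt_of_le hz.2 with h1 | h1
    · subst h1
      dsimp only
      norm_num [Real.zero_rpow, Real.sqrt_zero]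
    · have h1z : (0:ℝ) < 1 - z := by linarith
      have hD : 0 < 1 - z + lam * (1 + z) := hDpos z ⟨hz.1.le, hz.2⟩
      dsimp only
      rw [Real.rpow_neg h1z.le, ← Real.sqrt_eq_rpow]
      have hs0 : 0 < Real.sqrt (1 - z) := Real.sqrt_pos.2 h1z
      have hr0 : 0 < (1 - z + lam * (1 + z)) ^ ((3:ℝ)/2) := Real.rpow_pos_of_pos hD _
      have he0 : 0 < Real.sqrt (1 + lam) := Real.sqrt_pos.2 hl2
      field_simp
  rw [intervalIntegral.integral_eq_sub_of_hasDeriv_right_of_le (by norm_num) hcont hderiv hint]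
  have h1z : Real.sqrt (1 - (1:ℝ)) = 0 := by norm_num
  have hF1 : Fa lam 1 = 0 := by
    simp [Fa, h1z, Real.arctan_zero]
  set q := Real.sqrt (lam - 1) with hq_def
  set e := Real.sqrt (1 + lam) with he_def
  have hq0 : 0 < q := Real.sqrt_pos.2 hl1
  have he0 : 0 < e := Real.sqrt_pos.2 hl2
  have hq2 : q ^ 2 = lam - 1 := Real.sq_sqrt hl1.le
  have he2 : e ^ 2 = 1 + lam := Real.sq_sqrt hl2.le
  have hm : Real.sqrt (lam ^ 2 - 1) = q * e := by
    rw [hq_def, he_def, ← Real.sqrt_mul hl1.le]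
    ring_nf
  have harg : Real.sqrt ((lam - 1) / (1 + lam)) = q / e := by
    rw [hq_def, he_def, ← Real.sqrt_div hl1.le]
  have hF0 : Fa lam 0 = (2 * lam ^ 2 + 1) / (lam * (lam - 1) ^ 2)
      - 6 * lam / ((lam - 1) ^ 2 * (q * e)) * Real.arctan (q / e) := by
    have e10 : (1:ℝ) - 0 = 1 := by norm_num
    have eD0 : (1:ℝ) - 0 + lam * (1 + 0) = 1 + lam := by ring
    rw [Fa, eD0, e10, Real.sqrt_one, hm, ← he_def, ← hq_def]
    rw [show q * 1 / e = q / e by ring]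
    generalize Real.arctan (q / e) = a
    field_simp
    linear_combination (-2*lam^2*q - q) * he2
  rw [hF1, hF0, hm, harg]
  field_simp
  linear_combination (-6*lam^2*e^2*(Real.arctan (q/e))) * hq2 +
    (-6*lam^3*(Real.arctan (q/e)) + 6*lam^2*(Real.arctan (q/e))) * he2
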